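/- arXiv:1206.1488 — 2 statements merged into one kernel-verified Lean document; each statement's English description precedes it below -/
import Mathlib

section
/- Let 𝒜 ⊂ L(H_A) and ℬ ⊂ L(H_B) be unital separable C*-algebras with 𝒜 ∩ K(H_A) = {0} and ℬ ∩ K(H_B) = {0}, and let τ_A and τ_B be amenable traces on 𝒜 and ℬ respectively. Then there exists a state ψ on L(H_A ⊗ H_B) which is a hypertrace for the C*-algebra generated by {A ⊗ B : A ∈ 𝒜, B ∈ ℬ} on the Hilbert space tensor product H_A ⊗ H_B and satisfies ψ(A ⊗ B) = τ_A(A) τ_B(B) for all A ∈ 𝒜 and B ∈ ℬ. -/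
open Filter Topology
open scoped ComplexOrder

noncomputable section

variable {H : Type*} [NormedAddCommGroup H] [InnerProductSpace ℂ H] [CompleteSpace H]

/-- `P` is a finite-rank orthogonal projection on the Hilbert space `H`. -/
def IsFinRankProj (P : H →L[ℂ] H) : Prop :=
  IsIdempotentElem P ∧ IsSelfAdjoint P ∧ FiniteDimensional ℂ (LinearMap.range (P : H →ₗ[ℂ] H))

/-- The Hilbert–Schmidt norm of an operator, computed with respect to the Hilbert basis `b`
(for Hilbert–Schmidt operators it is independent of the choice of `b`). -/
def hsNorm {ι : Type*} (b : HilbertBasis ι ℂ H) (T : H →L[ℂ] H) : ℝ :=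
  Real.sqrt (∑' i, ‖T (b i)‖ ^ 2)

/-- The canonical trace of an operator, computed with respect to the Hilbert basis `b`
(for trace-class operators it is independent of the choice of `b`). -/
def trOp {ι : Type*} (b : HilbertBasis ι ℂ H) (T : H →L[ℂ] H) : ℂ :=
  ∑' i, (inner ℂ (b i) (T (b i)) : ℂ)

/-- `{P n}` is a Følner sequence (of non-zero finite-rank orthogonal projections)
for the set of operators `S ⊆ L(H)`. -/
def IsFolnerSeq {ι : Type*} (b : HilbertBasis ι ℂ H) (S : Set (H →L[ℂ] H))
    (P : ℕ → H →L[ℂ] H) : Prop :=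
  (∀ n, IsFinRankProj (P n) ∧ P n ≠ 0) ∧
  ∀ A ∈ S, Tendsto (fun n => hsNorm b (A * P n - P n * A) / hsNorm b (P n)) atTop (𝓝 0)

/-- A proper Følner sequence: an increasing Følner sequence converging strongly to `1`. -/
def IsProperFolnerSeq {ι : Type*} (b : HilbertBasis ι ℂ H) (S : Set (H →L[ℂ] H))
    (P : ℕ → H →L[ℂ] H) : Prop :=
  IsFolnerSeq b S P ∧ Monotone (fun n => LinearMap.range (P n : H →ₗ[ℂ] H)) ∧
    ∀ x : H, Tendsto (fun n => P n x) atTop (𝓝 x)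

/-- A state on a unital complex `*`-algebra: a unital positive linear functional. -/
def IsStateOn {A : Type*} [Ring A] [Algebra ℂ A] [StarRing A] (φ : A →ₗ[ℂ] ℂ) : Prop :=
  φ 1 = 1 ∧ ∀ a, 0 ≤ φ (star a * a)

/-- `ψ` is a hypertrace on `L(H)` for the set `S`: a state on `L(H)` centralized by `S`. -/
def IsHypertrace (ψ : (H →L[ℂ] H) →ₗ[ℂ] ℂ) (S : Set (H →L[ℂ] H)) : Prop :=
  IsStateOn ψ ∧ ∀ X : H →L[ℂ] H, ∀ A ∈ S, ψ (X * A) = ψ (A * X)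

/-- The inclusion of a star subalgebra as a linear map. -/
def valLM (𝒜 : StarSubalgebra ℂ (H →L[ℂ] H)) : ↥𝒜 →ₗ[ℂ] (H →L[ℂ] H) :=
  { toFun := Subtype.val, map_add' := fun _ _ => rfl, map_smul' := fun _ _ => rfl }

/-- `τ` is an amenable trace on the concrete C*-algebra `𝒜 ⊆ L(H)`: a state on `𝒜` which
extends to a state `ψ` on `L(H)` satisfying `ψ(XA) = ψ(AX)` for `X ∈ L(H)`, `A ∈ 𝒜`. -/
def IsAmenableTrace (𝒜 : StarSubalgebra ℂ (H →L[ℂ] H)) (τ : ↥𝒜 →ₗ[ℂ] ℂ) : Prop :=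
  IsStateOn τ ∧ ∃ ψ : (H →L[ℂ] H) →ₗ[ℂ] ℂ,
    IsHypertrace ψ ↑𝒜 ∧ ∀ a : ↥𝒜, ψ (valLM 𝒜 a) = τ a

section states
variable {A : Type*} [Ring A] [Algebra ℂ A] [StarRing A] [StarModule ℂ A] (φ : A →ₗ[ℂ] ℂ)

lemma state_im (hφ : IsStateOn φ) (a : A) : (φ (star a * a)).im = 0 := by
  have h := hφ.2 a
  rw [Complex.le_def] at h
  exact h.2.symm

lemma state_re (hφ : IsStateOn φ) (a : A) : 0 ≤ (φ (star a * a)).re := by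
  have h := hφ.2 a
  rw [Complex.le_def] at h
  simpa using h.1

lemma state_conj (hφ : IsStateOn φ) (a b : A) :
    φ (star b * a) = starRingEnd ℂ (φ (star a * b)) := by
  have hsum : ∀ u v : A, ((φ (star u * v)) + φ (star v * u)).im = 0 := by
    intro u v
    have h := state_im φ hφ (u + v)
    rw [star_add, add_mul, mul_add, mul_add, map_add, map_add, map_add] at h
    have hu := state_im φ hφ u
    have hv := state_im φ hφ v
    simp only [Complex.add_im] at h ⊢
    linarith
  have hre : ∀ u v : A, (φ (star u * v)).re = (φ (star v * u)).re := by
    intro u v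
    have h := state_im φ hφ (u + Complex.I • v)
    rw [star_add, star_smul, add_mul, mul_add, mul_add, map_add, map_add, map_add,
      smul_mul_assoc, mul_smul_comm, smul_mul_assoc, mul_smul_comm, smul_smul,
      map_smul, map_smul, map_smul] at h
    have hu := state_im φ hφ u
    have hv := state_im φ hφ v
    have hIc : (star Complex.I) = -Complex.I := by
      simp [Complex.star_def, Complex.conj_I]
    rw [hIc] at h
    simp only [Complex.add_im, Complex.smul_im, smul_eq_mul, neg_mul,
      Complex.neg_im, Complex.mul_im, Complex.I_re, Complex.I_im, Complex.mul_re,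
      neg_neg, Complex.neg_re] at h
    simp only [hu, hv] at h
    linarith
  have h1 := hsum a b
  apply Complex.ext
  · rw [Complex.conj_re]; exact hre b a
  · rw [Complex.conj_im]
    simp only [Complex.add_im] at h1
    linarith

lemma state_star_apply (hφ : IsStateOn φ) (b : A) : φ (star b) = starRingEnd ℂ (φ b) := by
  have := state_conj φ hφ 1 b
  simpa using this

lemma state_cs (hφ : IsStateOn φ) (b : A) : Complex.normSq (φ b) ≤ (φ (star b * b)).re := by
  have h := state_re φ hφ (b + (-(φ b)) • 1)
  rw [star_add, star_smul, add_mul, mul_add, mul_add] at h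
  simp only [star_one, smul_mul_assoc, mul_smul_comm, smul_smul, one_mul, mul_one,
    map_add, map_smul] at h
  rw [state_star_apply φ hφ b, hφ.1] at h
  have hst : (star (-(φ b)) : ℂ) = -(starRingEnd ℂ (φ b)) := by
    simp [Complex.star_def]
  rw [hst] at h
  simp only [smul_eq_mul, neg_mul, mul_neg, neg_neg, mul_one] at h
  simp only [Complex.add_re, Complex.neg_re, Complex.mul_re] at h
  have hns : Complex.normSq (φ b) = (φ b).re * (φ b).re + (φ b).im * (φ b).im := by
    simp [Complex.normSq_apply]
  simp only [Complex.conj_re, Complex.conj_im] at h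
  nlinarith [h]
end states


section opstates
variable {H : Type*} [NormedAddCommGroup H] [InnerProductSpace ℂ H] [CompleteSpace H]

lemma exists_star_mul_self' (P : H →L[ℂ] H) (hP : P.IsPositive) :
    ∃ r : H →L[ℂ] H, P = star r * r := by
  refine ⟨CFC.sqrt P, ?_⟩
  have h0 : (0:H →L[ℂ] H) ≤ P := (ContinuousLinearMap.nonneg_iff_isPositive P).mpr hP
  rw [(IsSelfAdjoint.of_nonneg (CFC.sqrt_nonneg P)).star_eq, CFC.sqrt_mul_sqrt_self P h0]

lemma isPositive_normSq_sub (T : H →L[ℂ] H) :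
    (((‖T‖^2 : ℝ) : ℂ) • (1:H →L[ℂ] H) - star T * T).IsPositive := by
  rw [ContinuousLinearMap.isPositive_def']
  constructor
  · have h1 : star (((‖T‖^2 : ℝ) : ℂ) • (1:H →L[ℂ] H)) = ((‖T‖^2 : ℝ) : ℂ) • 1 := by
      rw [star_smul, star_one]
      congr 1
      simp [Complex.star_def]
    rw [isSelfAdjoint_iff, star_sub, h1, star_mul, star_star]
  · intro x
    have hTx : ((star T * T) x) = ContinuousLinearMap.adjoint T (T x) := rfl
    rw [ContinuousLinearMap.reApplyInnerSelf_apply]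
    have : ((((‖T‖^2 : ℝ) : ℂ) • (1:H →L[ℂ] H) - star T * T) x) =
        ((‖T‖^2 : ℝ) : ℂ) • x - ContinuousLinearMap.adjoint T (T x) := by
      simp [ContinuousLinearMap.sub_apply, hTx, ContinuousLinearMap.star_eq_adjoint]
    rw [this, inner_sub_left, inner_smul_left, ContinuousLinearMap.adjoint_inner_left]
    have h2 : (inner ℂ (T x) (T x) : ℂ) = ((‖T x‖^2 : ℝ) : ℂ) := by
      rw [inner_self_eq_norm_sq_to_K]; norm_cast
    have h3 : (inner ℂ x x : ℂ) = ((‖x‖^2 : ℝ) : ℂ) := by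
      rw [inner_self_eq_norm_sq_to_K]; norm_cast
    rw [h2, h3]
    simp only [Complex.sub_re, Complex.mul_re, Complex.conj_re, Complex.conj_im,
      Complex.ofReal_re, Complex.ofReal_im, RCLike.re_to_complex]
    have h4 : ‖T x‖ ≤ ‖T‖ * ‖x‖ := T.le_opNorm x
    nlinarith [norm_nonneg (T x), norm_nonneg T, norm_nonneg x]

variable (φ : (H →L[ℂ] H) →ₗ[ℂ] ℂ)

lemma state_nonneg_of_isPositive (hφ : IsStateOn φ) (P : H →L[ℂ] H) (hP : P.IsPositive) :
    0 ≤ φ P := by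
  obtain ⟨r, rfl⟩ := exists_star_mul_self' P hP
  exact hφ.2 r

lemma state_norm_bound (hφ : IsStateOn φ) (T : H →L[ℂ] H) : ‖φ T‖ ≤ ‖T‖ := by
  have hcs := state_cs φ hφ T
  have hQ := state_nonneg_of_isPositive φ hφ _ (isPositive_normSq_sub T)
  rw [Complex.le_def] at hQ
  have h1 : (φ (((‖T‖^2 : ℝ) : ℂ) • (1:H →L[ℂ] H) - star T * T)).re =
      ‖T‖^2 - (φ (star T * T)).re := by
    rw [map_sub, map_smul, hφ.1]
    simp [Complex.sub_re, Complex.smul_re, ← Complex.ofReal_pow]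
  have h2 : (φ (star T * T)).re ≤ ‖T‖^2 := by
    have := hQ.1; rw [h1] at this; simpa using this
  have h3 : ‖φ T‖^2 ≤ ‖T‖^2 := by
    rw [Complex.sq_norm]
    exact hcs.trans h2
  have := Real.sqrt_le_sqrt h3
  rwa [Real.sqrt_sq (norm_nonneg _), Real.sqrt_sq (norm_nonneg _)] at this

end opstates

section tensor

variable {HA : Type*} [NormedAddCommGroup HA] [InnerProductSpace ℂ HA] [CompleteSpace HA]
variable {HB : Type*} [NormedAddCommGroup HB] [InnerProductSpace ℂ HB] [CompleteSpace HB]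
variable {K : Type*} [NormedAddCommGroup K] [InnerProductSpace ℂ K] [CompleteSpace K]
variable (t : HA →ₗ[ℂ] HB →ₗ[ℂ] K)
variable (hinner : ∀ (x x' : HA) (y y' : HB),
      (inner ℂ (t x y) (t x' y') : ℂ) = (inner ℂ x x' : ℂ) * (inner ℂ y y' : ℂ))

include hinner

lemma elem_norm (x : HA) (y : HB) : ‖t x y‖ = ‖x‖ * ‖y‖ := by
  have h := hinner x x y y
  rw [inner_self_eq_norm_sq_to_K, inner_self_eq_norm_sq_to_K, inner_self_eq_norm_sq_to_K] at h
  have h3 : ‖t x y‖^2 = (‖x‖ * ‖y‖)^2 := by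
    rw [mul_pow]; exact_mod_cast h
  have h4 := congrArg Real.sqrt h3
  rwa [Real.sqrt_sq (norm_nonneg _), Real.sqrt_sq (by positivity)] at h4

/-- `y ↦ t x y` as a continuous linear map. -/
def elemMap (x : HA) : HB →L[ℂ] K :=
  LinearMap.mkContinuous (t x) ‖x‖ (fun y => by rw [elem_norm t hinner])

@[simp] lemma elemMap_apply (x : HA) (y : HB) : elemMap t hinner x y = t x y := rfl

lemma elemMap_norm_le (x : HA) : ‖elemMap t hinner x‖ ≤ ‖x‖ :=
  LinearMap.mkContinuous_norm_le _ (norm_nonneg x) _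

lemma elemMap_add (x x' : HA) : elemMap t hinner (x + x') =
    elemMap t hinner x + elemMap t hinner x' := by
  ext y
  simp only [elemMap_apply, ContinuousLinearMap.add_apply, map_add, LinearMap.add_apply]

lemma elemMap_smul (c : ℂ) (x : HA) : elemMap t hinner (c • x) = c • elemMap t hinner x := by
  ext y
  simp only [elemMap_apply, ContinuousLinearMap.smul_apply, map_smul, LinearMap.smul_apply]

/-- The compression of `T : L(K)` by the pair `x x'` of vectors of `HA`. -/
def cmpOp (T : K →L[ℂ] K) (x x' : HA) : HB →L[ℂ] HB :=
  (ContinuousLinearMap.adjoint (elemMap t hinner x)) ∘L (T ∘L elemMap t hinner x')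

lemma cmpOp_inner (T : K →L[ℂ] K) (x x' : HA) (y y' : HB) :
    (inner ℂ y (cmpOp t hinner T x x' y') : ℂ) = inner ℂ (t x y) (T (t x' y')) := by
  rw [cmpOp, ContinuousLinearMap.comp_apply, ContinuousLinearMap.adjoint_inner_right]
  rfl

lemma cmpOp_norm_le (T : K →L[ℂ] K) (x x' : HA) :
    ‖cmpOp t hinner T x x'‖ ≤ (‖T‖ * ‖x'‖) * ‖x‖ := by
  have h1 := ContinuousLinearMap.opNorm_comp_le
    (ContinuousLinearMap.adjoint (elemMap t hinner x)) (T ∘L elemMap t hinner x')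
  have h2 := ContinuousLinearMap.opNorm_comp_le T (elemMap t hinner x')
  have h3 : ‖ContinuousLinearMap.adjoint (elemMap t hinner x)‖ = ‖elemMap t hinner x‖ :=
    LinearIsometryEquiv.norm_map ContinuousLinearMap.adjoint _
  have h4 := elemMap_norm_le t hinner x
  have h5 := elemMap_norm_le t hinner x'
  have hb : ‖T ∘L elemMap t hinner x'‖ ≤ ‖T‖ * ‖x'‖ :=
    h2.trans (mul_le_mul_of_nonneg_left h5 (norm_nonneg T))
  calc ‖cmpOp t hinner T x x'‖ ≤ ‖ContinuousLinearMap.adjoint (elemMap t hinner x)‖ *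
      ‖T ∘L elemMap t hinner x'‖ := h1
  _ ≤ ‖x‖ * (‖T‖ * ‖x'‖) := by
      rw [h3]
      exact mul_le_mul h4 hb (norm_nonneg _) (norm_nonneg x)
  _ = (‖T‖ * ‖x'‖) * ‖x‖ := by ring

lemma cmpOp_add_left (T : K →L[ℂ] K) (x₁ x₂ x' : HA) :
    cmpOp t hinner T (x₁ + x₂) x' = cmpOp t hinner T x₁ x' + cmpOp t hinner T x₂ x' := by
  rw [cmpOp, cmpOp, cmpOp, elemMap_add t hinner, map_add, ContinuousLinearMap.add_comp]

lemma cmpOp_smul_left (T : K →L[ℂ] K) (c : ℂ) (x x' : HA) :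
    cmpOp t hinner T (c • x) x' = starRingEnd ℂ c • cmpOp t hinner T x x' := by
  rw [cmpOp, cmpOp, elemMap_smul t hinner, LinearIsometryEquiv.map_smulₛₗ,
    ContinuousLinearMap.smul_comp]

lemma cmpOp_add_right (T : K →L[ℂ] K) (x x₁ x₂ : HA) :
    cmpOp t hinner T x (x₁ + x₂) = cmpOp t hinner T x x₁ + cmpOp t hinner T x x₂ := by
  rw [cmpOp, cmpOp, cmpOp, elemMap_add t hinner, ContinuousLinearMap.comp_add,
    ContinuousLinearMap.comp_add]

lemma cmpOp_smul_right (T : K →L[ℂ] K) (c : ℂ) (x x' : HA) :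
    cmpOp t hinner T x (c • x') = c • cmpOp t hinner T x x' := by
  rw [cmpOp, cmpOp, elemMap_smul t hinner, ContinuousLinearMap.comp_smul,
    ContinuousLinearMap.comp_smul]

variable (ψB : (HB →L[ℂ] HB) →ₗ[ℂ] ℂ) (hψBb : ∀ S : HB →L[ℂ] HB, ‖ψB S‖ ≤ ‖S‖)

include hψBb

/-- The functional `x ↦ conj (ψB (cmpOp T x x'))`. -/
def sliceFun (T : K →L[ℂ] K) (x' : HA) : HA →L[ℂ] ℂ :=
  LinearMap.mkContinuous
    { toFun := fun x => starRingEnd ℂ (ψB (cmpOp t hinner T x x'))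
      map_add' := by
        intro x₁ x₂
        rw [cmpOp_add_left t hinner, map_add, map_add]
      map_smul' := by
        intro c x
        rw [cmpOp_smul_left t hinner, map_smul, smul_eq_mul, map_mul, RingHom.id_apply]
        simp }
    (‖T‖ * ‖x'‖)
    (fun x => by
      simp only [LinearMap.coe_mk, AddHom.coe_mk]
      rw [RCLike.norm_conj]
      exact (hψBb _).trans (cmpOp_norm_le t hinner T x x'))

lemma sliceFun_apply (T : K →L[ℂ] K) (x' x : HA) :
    sliceFun t hinner ψB hψBb T x' x = starRingEnd ℂ (ψB (cmpOp t hinner T x x')) := rfl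

lemma sliceFun_norm_le (T : K →L[ℂ] K) (x' : HA) :
    ‖sliceFun t hinner ψB hψBb T x'‖ ≤ ‖T‖ * ‖x'‖ :=
  LinearMap.mkContinuous_norm_le _ (by positivity) _

/-- The slice map `L(K) → L(HA)` determined by `ψB`. -/
def sliceOp (T : K →L[ℂ] K) : HA →L[ℂ] HA :=
  LinearMap.mkContinuous
    { toFun := fun x' => (InnerProductSpace.toDual ℂ HA).symm (sliceFun t hinner ψB hψBb T x')
      map_add' := by
        intro x₁ x₂
        have h : sliceFun t hinner ψB hψBb T (x₁ + x₂) =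
            sliceFun t hinner ψB hψBb T x₁ + sliceFun t hinner ψB hψBb T x₂ := by
          ext x
          simp only [sliceFun_apply, ContinuousLinearMap.add_apply]
          rw [cmpOp_add_right t hinner, map_add, map_add]
        rw [h, map_add]
      map_smul' := by
        intro c x'
        have h : sliceFun t hinner ψB hψBb T (c • x') =
            starRingEnd ℂ c • sliceFun t hinner ψB hψBb T x' := by
          ext x
          simp only [sliceFun_apply, ContinuousLinearMap.smul_apply]
          rw [cmpOp_smul_right t hinner, map_smul, smul_eq_mul, map_mul, smul_eq_mul]
        rw [h, LinearIsometryEquiv.map_smulₛₗ, RingHom.id_apply]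
        simp }
    ‖T‖
    (fun x' => by
      simp only [LinearMap.coe_mk, AddHom.coe_mk]
      rw [LinearIsometryEquiv.norm_map]
      exact sliceFun_norm_le t hinner ψB hψBb T x')

lemma sliceOp_inner (T : K →L[ℂ] K) (x x' : HA) :
    (inner ℂ x (sliceOp t hinner ψB hψBb T x') : ℂ) = ψB (cmpOp t hinner T x x') := by
  have h1 : (inner ℂ (sliceOp t hinner ψB hψBb T x') x : ℂ) =
      starRingEnd ℂ (ψB (cmpOp t hinner T x x')) := by
    have : sliceOp t hinner ψB hψBb T x' =
        (InnerProductSpace.toDual ℂ HA).symm (sliceFun t hinner ψB hψBb T x') := rfl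
    rw [this, InnerProductSpace.toDual_symm_apply]
    rfl
  rw [← inner_conj_symm, h1]
  simp

lemma sliceOp_norm_le (T : K →L[ℂ] K) : ‖sliceOp t hinner ψB hψBb T‖ ≤ ‖T‖ :=
  LinearMap.mkContinuous_norm_le _ (norm_nonneg T) _

end tensor

section tensor2
set_option linter.unusedSectionVars false

variable {HA : Type*} [NormedAddCommGroup HA] [InnerProductSpace ℂ HA] [CompleteSpace HA]
variable {HB : Type*} [NormedAddCommGroup HB] [InnerProductSpace ℂ HB] [CompleteSpace HB]
variable {K : Type*} [NormedAddCommGroup K] [InnerProductSpace ℂ K] [CompleteSpace K]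
variable (t : HA →ₗ[ℂ] HB →ₗ[ℂ] K)
variable (hinner : ∀ (x x' : HA) (y y' : HB),
      (inner ℂ (t x y) (t x' y') : ℂ) = (inner ℂ x x' : ℂ) * (inner ℂ y y' : ℂ))
variable (hdense : Dense (Submodule.span ℂ {z : K | ∃ x y, z = t x y} : Set K))
variable (TP : (HA →L[ℂ] HA) → (HB →L[ℂ] HB) → (K →L[ℂ] K))
variable (hTP : ∀ (A : HA →L[ℂ] HA) (B : HB →L[ℂ] HB) (x : HA) (y : HB),
      TP A B (t x y) = t (A x) (B y))

include hdense in
lemma ext_dense {W : Type*} [NormedAddCommGroup W] [NormedSpace ℂ W]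
    (f g : K →L[ℂ] W) (h : ∀ x y, f (t x y) = g (t x y)) : f = g := by
  have hs : Set.EqOn f g (Submodule.span ℂ {z : K | ∃ x y, z = t x y} : Set K) := by
    intro z hz
    induction hz using Submodule.span_induction with
    | mem z hzm => obtain ⟨x, y, rfl⟩ := hzm; exact h x y
    | zero => simp
    | add u v _ _ hu hv => simp [map_add, hu, hv]
    | smul c u _ hu => simp [map_smul, hu]
  exact ContinuousLinearMap.coeFn_injective
    (Continuous.ext_on hdense f.continuous g.continuous hs)

include hdense hTP in
lemma TP_one : TP 1 1 = 1 := by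
  apply ext_dense t hdense
  intro x y
  rw [hTP]
  simp

include hinner hTP in
lemma TP_comp_elem (A : HA →L[ℂ] HA) (B : HB →L[ℂ] HB) (x' : HA) :
    TP A B ∘L elemMap t hinner x' = elemMap t hinner (A x') ∘L B := by
  ext y
  simp only [ContinuousLinearMap.comp_apply, elemMap_apply]
  rw [hTP]

include hinner in
lemma elem_adj_elem (x x'' : HA) :
    (ContinuousLinearMap.adjoint (elemMap t hinner x)) ∘L elemMap t hinner x'' =
      (inner ℂ x x'' : ℂ) • (1 : HB →L[ℂ] HB) := by
  ext y'
  apply ext_inner_left ℂ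
  intro y
  rw [ContinuousLinearMap.comp_apply, ContinuousLinearMap.adjoint_inner_right]
  simp only [elemMap_apply, ContinuousLinearMap.smul_apply, ContinuousLinearMap.one_apply,
    inner_smul_right]
  rw [hinner]

include hinner hdense hTP in
lemma adj_TP (A : HA →L[ℂ] HA) (B : HB →L[ℂ] HB) :
    ContinuousLinearMap.adjoint (TP A B) =
      TP (ContinuousLinearMap.adjoint A) (ContinuousLinearMap.adjoint B) := by
  symm
  apply ext_dense t hdense
  intro x y
  apply ext_inner_right ℂ
  intro w
  rw [ContinuousLinearMap.adjoint_inner_left, hTP]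
  have h2 := ext_dense t hdense
    (innerSL ℂ (t (ContinuousLinearMap.adjoint A x) (ContinuousLinearMap.adjoint B y)))
    ((innerSL ℂ (t x y)).comp (TP A B)) ?_
  · exact ContinuousLinearMap.ext_iff.mp h2 w
  · intro x' y'
    simp only [innerSL_apply_apply, ContinuousLinearMap.comp_apply]
    rw [hinner, hTP, hinner, ContinuousLinearMap.adjoint_inner_left,
      ContinuousLinearMap.adjoint_inner_left]

end tensor2

section tensor3
set_option linter.unusedSectionVars false
open ContinuousLinearMap (adjoint)

variable {HA : Type*} [NormedAddCommGroup HA] [InnerProductSpace ℂ HA] [CompleteSpace HA]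
variable {HB : Type*} [NormedAddCommGroup HB] [InnerProductSpace ℂ HB] [CompleteSpace HB]
variable {K : Type*} [NormedAddCommGroup K] [InnerProductSpace ℂ K] [CompleteSpace K]
variable (t : HA →ₗ[ℂ] HB →ₗ[ℂ] K)
variable (hinner : ∀ (x x' : HA) (y y' : HB),
      (inner ℂ (t x y) (t x' y') : ℂ) = (inner ℂ x x' : ℂ) * (inner ℂ y y' : ℂ))
variable (hdense : Dense (Submodule.span ℂ {z : K | ∃ x y, z = t x y} : Set K))
variable (TP : (HA →L[ℂ] HA) → (HB →L[ℂ] HB) → (K →L[ℂ] K))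
variable (hTP : ∀ (A : HA →L[ℂ] HA) (B : HB →L[ℂ] HB) (x : HA) (y : HB),
      TP A B (t x y) = t (A x) (B y))
variable (ψB : (HB →L[ℂ] HB) →ₗ[ℂ] ℂ) (hψBb : ∀ S : HB →L[ℂ] HB, ‖ψB S‖ ≤ ‖S‖)

lemma adjoint_one' : adjoint (1 : HB →L[ℂ] HB) = 1 := by
  rw [← ContinuousLinearMap.star_eq_adjoint, star_one]

lemma comp_one' {E F : Type*} [NormedAddCommGroup E] [NormedSpace ℂ E]
    [NormedAddCommGroup F] [NormedSpace ℂ F] (f : E →L[ℂ] F) :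
    f ∘L (1 : E →L[ℂ] E) = f := by ext z; rfl

include hinner hTP in
lemma cmpOp_TP (A : HA →L[ℂ] HA) (B : HB →L[ℂ] HB) (x x' : HA) :
    cmpOp t hinner (TP A B) x x' = (inner ℂ x (A x') : ℂ) • B := by
  rw [cmpOp, TP_comp_elem t hinner TP hTP, ← ContinuousLinearMap.comp_assoc,
    elem_adj_elem t hinner, ContinuousLinearMap.smul_comp, ContinuousLinearMap.one_def,
    ContinuousLinearMap.id_comp]

include hinner hTP in
lemma sliceOp_TP (A : HA →L[ℂ] HA) (B : HB →L[ℂ] HB) :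
    sliceOp t hinner ψB hψBb (TP A B) = ψB B • A := by
  ext x'
  apply ext_inner_left ℂ
  intro x
  rw [sliceOp_inner, cmpOp_TP t hinner TP hTP, map_smul, smul_eq_mul,
    ContinuousLinearMap.smul_apply, inner_smul_right]
  ring

include hinner hTP in
lemma cmpOp_TPA_right (X : K →L[ℂ] K) (A : HA →L[ℂ] HA) (x x' : HA) :
    cmpOp t hinner (X ∘L TP A 1) x x' = cmpOp t hinner X x (A x') := by
  rw [cmpOp, cmpOp, ContinuousLinearMap.comp_assoc, TP_comp_elem t hinner TP hTP, comp_one']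

include hinner hTP in
lemma cmpOp_TPB_right (X : K →L[ℂ] K) (B : HB →L[ℂ] HB) (x x' : HA) :
    cmpOp t hinner (X ∘L TP 1 B) x x' = cmpOp t hinner X x x' ∘L B := by
  rw [cmpOp, cmpOp, ContinuousLinearMap.comp_assoc, TP_comp_elem t hinner TP hTP,
    ContinuousLinearMap.one_apply, ← ContinuousLinearMap.comp_assoc,
    ← ContinuousLinearMap.comp_assoc, ← ContinuousLinearMap.comp_assoc]

include hinner hdense hTP in
lemma adj_elem_TPA (A : HA →L[ℂ] HA) (x : HA) :
    adjoint (elemMap t hinner x) ∘L TP A 1 = adjoint (elemMap t hinner (adjoint A x)) := by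
  have h1 : TP (adjoint A) 1 ∘L elemMap t hinner x = elemMap t hinner (adjoint A x) := by
    rw [TP_comp_elem t hinner TP hTP, comp_one']
  rw [← h1, ContinuousLinearMap.adjoint_comp, adj_TP t hinner hdense TP hTP,
    ContinuousLinearMap.adjoint_adjoint, adjoint_one']

include hinner hdense hTP in
lemma cmpOp_TPA_left (X : K →L[ℂ] K) (A : HA →L[ℂ] HA) (x x' : HA) :
    cmpOp t hinner (TP A 1 ∘L X) x x' = cmpOp t hinner X (adjoint A x) x' := by
  rw [cmpOp, cmpOp, ← ContinuousLinearMap.comp_assoc, ← ContinuousLinearMap.comp_assoc,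
    adj_elem_TPA t hinner hdense TP hTP, ContinuousLinearMap.comp_assoc]

include hinner hdense hTP in
lemma adj_elem_TPB (B : HB →L[ℂ] HB) (x : HA) :
    adjoint (elemMap t hinner x) ∘L TP 1 B = B ∘L adjoint (elemMap t hinner x) := by
  have h1 : TP 1 (adjoint B) ∘L elemMap t hinner x = elemMap t hinner x ∘L adjoint B := by
    rw [TP_comp_elem t hinner TP hTP, ContinuousLinearMap.one_apply]
  have h2 : adjoint (TP 1 (adjoint B)) = TP 1 B := by
    rw [adj_TP t hinner hdense TP hTP, ContinuousLinearMap.adjoint_adjoint, adjoint_one']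
  calc adjoint (elemMap t hinner x) ∘L TP 1 B
      = adjoint (TP 1 (adjoint B) ∘L elemMap t hinner x) := by
        rw [ContinuousLinearMap.adjoint_comp, h2]
    _ = adjoint (elemMap t hinner x ∘L adjoint B) := by rw [h1]
    _ = B ∘L adjoint (elemMap t hinner x) := by
        rw [ContinuousLinearMap.adjoint_comp, ContinuousLinearMap.adjoint_adjoint]

include hinner hdense hTP in
lemma cmpOp_TPB_left (X : K →L[ℂ] K) (B : HB →L[ℂ] HB) (x x' : HA) :
    cmpOp t hinner (TP 1 B ∘L X) x x' = B ∘L cmpOp t hinner X x x' := by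
  rw [cmpOp, cmpOp, ← ContinuousLinearMap.comp_assoc, ← ContinuousLinearMap.comp_assoc,
    adj_elem_TPB t hinner hdense TP hTP, ContinuousLinearMap.comp_assoc,
    ContinuousLinearMap.comp_assoc]

include hinner hTP in
lemma sliceA_right (X : K →L[ℂ] K) (A : HA →L[ℂ] HA) :
    sliceOp t hinner ψB hψBb (X ∘L TP A 1) = sliceOp t hinner ψB hψBb X ∘L A := by
  ext x'
  apply ext_inner_left ℂ
  intro x
  rw [sliceOp_inner, cmpOp_TPA_right t hinner TP hTP, ContinuousLinearMap.comp_apply,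
    sliceOp_inner]

include hinner hdense hTP in
lemma sliceA_left (X : K →L[ℂ] K) (A : HA →L[ℂ] HA) :
    sliceOp t hinner ψB hψBb (TP A 1 ∘L X) = A ∘L sliceOp t hinner ψB hψBb X := by
  ext x'
  apply ext_inner_left ℂ
  intro x
  rw [sliceOp_inner, cmpOp_TPA_left t hinner hdense TP hTP, ContinuousLinearMap.comp_apply,
    ← ContinuousLinearMap.adjoint_inner_left A, sliceOp_inner]

include hinner hdense hTP in
lemma sliceB_comm (X : K →L[ℂ] K) (B : HB →L[ℂ] HB)
    (hc : ∀ S : HB →L[ℂ] HB, ψB (S ∘L B) = ψB (B ∘L S)) :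
    sliceOp t hinner ψB hψBb (X ∘L TP 1 B) = sliceOp t hinner ψB hψBb (TP 1 B ∘L X) := by
  ext x'
  apply ext_inner_left ℂ
  intro x
  rw [sliceOp_inner, sliceOp_inner, cmpOp_TPB_right t hinner TP hTP,
    cmpOp_TPB_left t hinner hdense TP hTP, hc]

include hinner in
lemma cmpOp_add_T (T₁ T₂ : K →L[ℂ] K) (x x' : HA) :
    cmpOp t hinner (T₁ + T₂) x x' = cmpOp t hinner T₁ x x' + cmpOp t hinner T₂ x x' := by
  rw [cmpOp, cmpOp, cmpOp, ContinuousLinearMap.add_comp, ContinuousLinearMap.comp_add]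

include hinner in
lemma cmpOp_smul_T (c : ℂ) (T : K →L[ℂ] K) (x x' : HA) :
    cmpOp t hinner (c • T) x x' = c • cmpOp t hinner T x x' := by
  rw [cmpOp, cmpOp, ContinuousLinearMap.smul_comp, ContinuousLinearMap.comp_smul]

include hinner in
lemma sliceOp_add_T (T₁ T₂ : K →L[ℂ] K) :
    sliceOp t hinner ψB hψBb (T₁ + T₂) =
      sliceOp t hinner ψB hψBb T₁ + sliceOp t hinner ψB hψBb T₂ := by
  ext x'
  apply ext_inner_left ℂ
  intro x
  rw [sliceOp_inner, cmpOp_add_T t hinner, map_add, ContinuousLinearMap.add_apply,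
    inner_add_right, sliceOp_inner, sliceOp_inner]

include hinner in
lemma sliceOp_smul_T (c : ℂ) (T : K →L[ℂ] K) :
    sliceOp t hinner ψB hψBb (c • T) = c • sliceOp t hinner ψB hψBb T := by
  ext x'
  apply ext_inner_left ℂ
  intro x
  rw [sliceOp_inner, cmpOp_smul_T t hinner, map_smul, ContinuousLinearMap.smul_apply,
    inner_smul_right, sliceOp_inner, smul_eq_mul]

include hinner in
lemma cmpOp_adjoint (T : K →L[ℂ] K) (x x' : HA) :
    cmpOp t hinner (adjoint T) x x' = adjoint (cmpOp t hinner T x' x) := by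
  rw [cmpOp, cmpOp, ContinuousLinearMap.adjoint_comp, ContinuousLinearMap.adjoint_comp,
    ContinuousLinearMap.adjoint_adjoint, ContinuousLinearMap.comp_assoc]

include hinner in
lemma sliceOp_adjoint (T : K →L[ℂ] K)
    (hψBc : ∀ S : HB →L[ℂ] HB, ψB (star S) = starRingEnd ℂ (ψB S)) :
    sliceOp t hinner ψB hψBb (adjoint T) = adjoint (sliceOp t hinner ψB hψBb T) := by
  ext x'
  apply ext_inner_left ℂ
  intro x
  rw [sliceOp_inner, cmpOp_adjoint t hinner, ContinuousLinearMap.adjoint_inner_right,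
    ← ContinuousLinearMap.star_eq_adjoint, hψBc, ← sliceOp_inner t hinner ψB hψBb,
    ← inner_conj_symm]
  simp

include hinner in
lemma cmpOp_self_adj (S : K →L[ℂ] K) (x x' : HA) :
    cmpOp t hinner (adjoint S ∘L S) x x' =
      adjoint (S ∘L elemMap t hinner x) ∘L (S ∘L elemMap t hinner x') := by
  rw [cmpOp, ContinuousLinearMap.adjoint_comp, ContinuousLinearMap.comp_assoc,
    ContinuousLinearMap.comp_assoc]

include hinner in
lemma sliceOp_pos (S : K →L[ℂ] K)
    (hψBc : ∀ S : HB →L[ℂ] HB, ψB (star S) = starRingEnd ℂ (ψB S))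
    (hψBpos : ∀ Q : HB →L[ℂ] HB, Q.IsPositive → 0 ≤ ψB Q) :
    (sliceOp t hinner ψB hψBb (adjoint S ∘L S)).IsPositive := by
  have hsa : IsSelfAdjoint (adjoint S ∘L S) := by
    rw [isSelfAdjoint_iff, ContinuousLinearMap.star_eq_adjoint, ContinuousLinearMap.adjoint_comp,
      ContinuousLinearMap.adjoint_adjoint]
  have hPsa : IsSelfAdjoint (sliceOp t hinner ψB hψBb (adjoint S ∘L S)) := by
    rw [isSelfAdjoint_iff, ContinuousLinearMap.star_eq_adjoint,
      ← sliceOp_adjoint t hinner ψB hψBb _ hψBc, ContinuousLinearMap.adjoint_comp,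
      ContinuousLinearMap.adjoint_adjoint]
  refine ContinuousLinearMap.isPositive_def'.mpr ⟨hPsa, ?_⟩
  intro x
  rw [ContinuousLinearMap.reApplyInnerSelf_apply]
  have hQ : (cmpOp t hinner (adjoint S ∘L S) x x).IsPositive := by
    rw [cmpOp_self_adj t hinner]
    rw [ContinuousLinearMap.isPositive_def']
    constructor
    · rw [isSelfAdjoint_iff, ContinuousLinearMap.star_eq_adjoint, ContinuousLinearMap.adjoint_comp,
        ContinuousLinearMap.adjoint_adjoint]
    · intro y
      rw [ContinuousLinearMap.reApplyInnerSelf_apply, ContinuousLinearMap.comp_apply,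
        ContinuousLinearMap.adjoint_inner_left]
      rw [inner_self_eq_norm_sq_to_K]
      rw [← RCLike.ofReal_pow, RCLike.ofReal_re]
      exact sq_nonneg _
  have h0 := hψBpos _ hQ
  rw [Complex.le_def] at h0
  have h1 : (inner ℂ x ((sliceOp t hinner ψB hψBb (adjoint S ∘L S)) x) : ℂ) =
      ψB (cmpOp t hinner (adjoint S ∘L S) x x) := sliceOp_inner t hinner ψB hψBb _ x x
  have h2 : (inner ℂ ((sliceOp t hinner ψB hψBb (adjoint S ∘L S)) x) x : ℂ) =
      starRingEnd ℂ (ψB (cmpOp t hinner (adjoint S ∘L S) x x)) := by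
    rw [← inner_conj_symm, h1]
  rw [RCLike.re_to_complex, h2, Complex.conj_re]
  simpa using h0.1

end tensor3


/-- tensor products of amenable traces. Let `𝒜 ⊆ L(H_A)`, `ℬ ⊆ L(H_B)` be
unital separable C*-algebras containing no non-zero compact operators, with amenable
traces `τ_A`, `τ_B`. Realizing the Hilbert space tensor product `H_A ⊗ H_B` as a Hilbert
space `K` (with elementary tensors `t` and tensor product operators `TP` as below), there
exists a state `ψ` on `L(K)` which is a hypertrace for the C*-algebra generated by the
operators `A ⊗ B` (`A ∈ 𝒜`, `B ∈ ℬ`) and satisfies `ψ(A ⊗ B) = τ_A(A)τ_B(B)`. -/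
theorem tensorProduct_amenableTrace
    {HA : Type*} [NormedAddCommGroup HA] [InnerProductSpace ℂ HA] [CompleteSpace HA]
    {HB : Type*} [NormedAddCommGroup HB] [InnerProductSpace ℂ HB] [CompleteSpace HB]
    {K : Type*} [NormedAddCommGroup K] [InnerProductSpace ℂ K] [CompleteSpace K]
    {ιA ιB : Type*} [Countable ιA] [Countable ιB]
    (bA : HilbertBasis ιA ℂ HA) (bB : HilbertBasis ιB ℂ HB)
    (t : HA →ₗ[ℂ] HB →ₗ[ℂ] K)
    (hinner : ∀ (x x' : HA) (y y' : HB),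
      (inner ℂ (t x y) (t x' y') : ℂ) = (inner ℂ x x' : ℂ) * (inner ℂ y y' : ℂ))
    (hdense : Dense (Submodule.span ℂ {z : K | ∃ x y, z = t x y} : Set K))
    (TP : (HA →L[ℂ] HA) → (HB →L[ℂ] HB) → (K →L[ℂ] K))
    (hTP : ∀ (A : HA →L[ℂ] HA) (B : HB →L[ℂ] HB) (x : HA) (y : HB),
      TP A B (t x y) = t (A x) (B y))
    (𝒜 : StarSubalgebra ℂ (HA →L[ℂ] HA)) (hclosedA : IsClosed (𝒜 : Set (HA →L[ℂ] HA)))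
    (hsepA : TopologicalSpace.IsSeparable (𝒜 : Set (HA →L[ℂ] HA)))
    (hcompactA : ∀ T ∈ 𝒜, IsCompactOperator T → T = 0)
    (ℬ : StarSubalgebra ℂ (HB →L[ℂ] HB)) (hclosedB : IsClosed (ℬ : Set (HB →L[ℂ] HB)))
    (hsepB : TopologicalSpace.IsSeparable (ℬ : Set (HB →L[ℂ] HB)))
    (hcompactB : ∀ T ∈ ℬ, IsCompactOperator T → T = 0)
    (τA : ↥𝒜 →ₗ[ℂ] ℂ) (hτA : IsAmenableTrace 𝒜 τA)
    (τB : ↥ℬ →ₗ[ℂ] ℂ) (hτB : IsAmenableTrace ℬ τB) :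
    ∃ ψ : (K →L[ℂ] K) →ₗ[ℂ] ℂ,
      IsHypertrace ψ
        (((StarAlgebra.adjoin ℂ
            {X : K →L[ℂ] K | ∃ A ∈ 𝒜, ∃ B ∈ ℬ, X = TP A B}).topologicalClosure :
          StarSubalgebra ℂ (K →L[ℂ] K)) : Set (K →L[ℂ] K)) ∧
      ∀ (a : ↥𝒜) (b : ↥ℬ), ψ (TP (a : HA →L[ℂ] HA) (b : HB →L[ℂ] HB)) = τA a * τB b := by
  classical
  obtain ⟨hτAs, ψA, ⟨hψAs, hψAc⟩, hψAv⟩ := hτA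
  obtain ⟨hτBs, ψB, ⟨hψBs, hψBc⟩, hψBv⟩ := hτB
  have hψBb : ∀ S : HB →L[ℂ] HB, ‖ψB S‖ ≤ ‖S‖ := fun S => state_norm_bound ψB hψBs S
  have hψBstar : ∀ S : HB →L[ℂ] HB, ψB (star S) = starRingEnd ℂ (ψB S) :=
    fun S => state_star_apply ψB hψBs S
  have hψBpos : ∀ Q : HB →L[ℂ] HB, Q.IsPositive → 0 ≤ ψB Q :=
    fun Q hQ => state_nonneg_of_isPositive ψB hψBs Q hQ
  -- the product functional
  set Ψ : (K →L[ℂ] K) →ₗ[ℂ] ℂ :=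
    { toFun := fun T => ψA (sliceOp t hinner ψB hψBb T)
      map_add' := by
        intro T₁ T₂
        rw [sliceOp_add_T t hinner, map_add]
      map_smul' := by
        intro c T
        rw [sliceOp_smul_T t hinner, map_smul, RingHom.id_apply, smul_eq_mul] } with hΨdef
  have hΨapply : ∀ T, Ψ T = ψA (sliceOp t hinner ψB hψBb T) := fun T => rfl
  have hTPone : TP 1 1 = 1 := TP_one t hdense TP hTP
  have hΨ1 : Ψ 1 = 1 := by
    rw [hΨapply, ← hTPone, sliceOp_TP t hinner TP hTP ψB hψBb, map_smul, smul_eq_mul,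
      hψBs.1, hψAs.1, one_mul]
  have hΨpos : ∀ S, 0 ≤ Ψ (star S * S) := by
    intro S
    rw [hΨapply]
    have h1 : star S * S = ContinuousLinearMap.adjoint S ∘L S := by
      rw [ContinuousLinearMap.mul_def, ContinuousLinearMap.star_eq_adjoint]
    rw [h1]
    exact state_nonneg_of_isPositive ψA hψAs _
      (sliceOp_pos t hinner ψB hψBb S hψBstar hψBpos)
  have hΨs : IsStateOn Ψ := ⟨hΨ1, hΨpos⟩
  have hΨconj : ∀ T, Ψ (star T) = starRingEnd ℂ (Ψ T) := fun T => state_star_apply Ψ hΨs T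
  have hΨb : ∀ T, ‖Ψ T‖ ≤ ‖T‖ := by
    intro T
    rw [hΨapply]
    exact (state_norm_bound ψA hψAs _).trans (sliceOp_norm_le t hinner ψB hψBb T)
  have hval : ∀ (a : ↥𝒜) (b : ↥ℬ), Ψ (TP ↑a ↑b) = τA a * τB b := by
    intro a b
    rw [hΨapply, sliceOp_TP t hinner TP hTP ψB hψBb, map_smul, smul_eq_mul]
    have ha : ψA ↑a = τA a := hψAv a
    have hb : ψB ↑b = τB b := hψBv b
    rw [ha, hb, mul_comm]
  have hBcomm : ∀ B ∈ ℬ, ∀ S : HB →L[ℂ] HB, ψB (S ∘L B) = ψB (B ∘L S) := by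
    intro B hB S
    have := hψBc S B hB
    rwa [ContinuousLinearMap.mul_def, ContinuousLinearMap.mul_def] at this
  have hkeyB : ∀ (Y : K →L[ℂ] K) (B : HB →L[ℂ] HB), B ∈ ℬ →
      Ψ (Y ∘L TP 1 B) = Ψ (TP 1 B ∘L Y) := by
    intro Y B hB
    rw [hΨapply, hΨapply, sliceB_comm t hinner hdense TP hTP ψB hψBb Y B (hBcomm B hB)]
  have hkeyA : ∀ (Y : K →L[ℂ] K) (A : HA →L[ℂ] HA), A ∈ 𝒜 →
      Ψ (Y ∘L TP A 1) = Ψ (TP A 1 ∘L Y) := by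
    intro Y A hA
    rw [hΨapply, hΨapply, sliceA_right t hinner TP hTP ψB hψBb,
      sliceA_left t hinner hdense TP hTP ψB hψBb]
    have := hψAc (sliceOp t hinner ψB hψBb Y) A hA
    rwa [ContinuousLinearMap.mul_def, ContinuousLinearMap.mul_def] at this
  have hTPsplit : ∀ (A : HA →L[ℂ] HA) (B : HB →L[ℂ] HB), TP A B = TP A 1 ∘L TP 1 B := by
    intro A B
    apply ext_dense t hdense
    intro x y
    rw [ContinuousLinearMap.comp_apply, hTP, hTP, hTP, ContinuousLinearMap.one_apply,
      ContinuousLinearMap.one_apply]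
  have hgen : ∀ S ∈ {X : K →L[ℂ] K | ∃ A ∈ 𝒜, ∃ B ∈ ℬ, X = TP A B}, ∀ X, Ψ (X * S) = Ψ (S * X) := by
    rintro S ⟨A, hA, B, hB, rfl⟩ X
    rw [ContinuousLinearMap.mul_def, ContinuousLinearMap.mul_def, hTPsplit A B]
    calc Ψ (X ∘L (TP A 1 ∘L TP 1 B))
        = Ψ ((X ∘L TP A 1) ∘L TP 1 B) := by rw [ContinuousLinearMap.comp_assoc]
      _ = Ψ (TP 1 B ∘L (X ∘L TP A 1)) := hkeyB _ B hB
      _ = Ψ ((TP 1 B ∘L X) ∘L TP A 1) := by rw [ContinuousLinearMap.comp_assoc]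
      _ = Ψ (TP A 1 ∘L (TP 1 B ∘L X)) := hkeyA _ A hA
      _ = Ψ ((TP A 1 ∘L TP 1 B) ∘L X) := by rw [ContinuousLinearMap.comp_assoc]
  have halg : ∀ S ∈ StarAlgebra.adjoin ℂ {X : K →L[ℂ] K | ∃ A ∈ 𝒜, ∃ B ∈ ℬ, X = TP A B}, ∀ X, Ψ (X * S) = Ψ (S * X) := by
    intro S hS
    induction hS using StarAlgebra.adjoin_induction with
    | mem x hx => exact hgen x hx
    | algebraMap r =>
        intro X
        rw [Algebra.algebraMap_eq_smul_one, mul_smul_comm, smul_mul_assoc, mul_one, one_mul]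
    | add x y hx hy ihx ihy =>
        intro X
        rw [mul_add, add_mul, map_add, map_add, ihx X, ihy X]
    | mul x y hx hy ihx ihy =>
        intro X
        calc Ψ (X * (x * y)) = Ψ ((X * x) * y) := by rw [mul_assoc]
          _ = Ψ (y * (X * x)) := ihy _
          _ = Ψ ((y * X) * x) := by rw [mul_assoc]
          _ = Ψ (x * (y * X)) := ihx _
          _ = Ψ ((x * y) * X) := by rw [mul_assoc]
    | star x hx ihx =>
        intro X
        have h1 : Ψ (X * star x) = starRingEnd ℂ (Ψ (x * star X)) := by
          rw [← hΨconj (x * star X)]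
          congr 1
          rw [star_mul, star_star]
        have h2 : Ψ (x * star X) = Ψ (star X * x) := (ihx (star X)).symm
        have h3 : star X * x = star (star x * X) := by rw [star_mul, star_star]
        rw [h1, h2, h3, hΨconj]
        simp
  have hΨcont : Continuous Ψ := by
    exact AddMonoidHomClass.continuous_of_bound Ψ 1 (fun T => by rw [one_mul]; exact hΨb T)
  have hclos : ∀ S ∈ (((StarAlgebra.adjoin ℂ {X : K →L[ℂ] K | ∃ A ∈ 𝒜, ∃ B ∈ ℬ, X = TP A B}).topologicalClosure :
      StarSubalgebra ℂ (K →L[ℂ] K)) : Set (K →L[ℂ] K)), ∀ X, Ψ (X * S) = Ψ (S * X) := by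
    intro S hS X
    have hmem : S ∈ closure ((StarAlgebra.adjoin ℂ {X : K →L[ℂ] K | ∃ A ∈ 𝒜, ∃ B ∈ ℬ, X = TP A B} : StarSubalgebra ℂ (K →L[ℂ] K)) :
        Set (K →L[ℂ] K)) := by
      rwa [← StarSubalgebra.topologicalClosure_coe]
    have hcl : IsClosed {S' : K →L[ℂ] K | Ψ (X * S') = Ψ (S' * X)} :=
      isClosed_eq (hΨcont.comp (continuous_mul_left X)) (hΨcont.comp (continuous_mul_right X))
    have hsub : ((StarAlgebra.adjoin ℂ {X : K →L[ℂ] K | ∃ A ∈ 𝒜, ∃ B ∈ ℬ, X = TP A B} : StarSubalgebra ℂ (K →L[ℂ] K)) :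
        Set (K →L[ℂ] K)) ⊆ {S' : K →L[ℂ] K | Ψ (X * S') = Ψ (S' * X)} :=
      fun S' hS' => halg S' hS' X
    exact (closure_minimal hsub hcl) hmem
  refine ⟨Ψ, ⟨hΨs, ?_⟩, hval⟩
  intro X S hS
  exact hclos S hS X
end
end

section
/- Let 𝒜 be a unital separable C*-algebra, let π₀ : 𝒜 → L(H₀) be a faithful unital representation, and let π : 𝒜 → L(H) be a non-zero unital representation such that π(𝒜) has an amenable trace. Then π₀(𝒜) has an amenable trace. More precisely, if ψ is a hypertrace on L(H) for π(𝒜) and Φ : L(H₀) → L(H) is any unital completely positive map extending π ∘ π₀⁻¹ on π₀(𝒜), then ψ ∘ Φ is a hypertrace on L(H₀) for π₀(𝒜). -/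
open Filter Topology
open scoped ComplexOrder

noncomputable section

variable {H : Type*} [NormedAddCommGroup H] [InnerProductSpace ℂ H] [CompleteSpace H]

/-- A linear map between unital complex `*`-algebras is completely positive if all its
matrix amplifications map positive elements to positive elements. -/
def IsCP {A B : Type*} [Ring A] [Algebra ℂ A] [StarRing A]
    [Ring B] [Algebra ℂ B] [StarRing B] (φ : A →ₗ[ℂ] B) : Prop :=
  ∀ (n : ℕ) (x : Matrix (Fin n) (Fin n) A),
    (∃ y : Matrix (Fin n) (Fin n) A, x = star y * y) →
      ∃ z : Matrix (Fin n) (Fin n) B, x.map φ = star z * z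

/-- Unital completely positive map. -/
def IsUCP {A B : Type*} [Ring A] [Algebra ℂ A] [StarRing A]
    [Ring B] [Algebra ℂ B] [StarRing B] (φ : A →ₗ[ℂ] B) : Prop :=
  φ 1 = 1 ∧ IsCP φ

/-- The `2`-norm `‖F‖₂ = √(tr(F*F))` on `M_k(ℂ)` associated with the normalized trace `tr`. -/
def l2trNorm {k : ℕ} (F : Matrix (Fin k) (Fin k) ℂ) : ℝ :=
  Real.sqrt ((Matrix.trace (star F * F)).re / k)

/-- The operator (C*-) norm of a complex matrix. -/
def matOpNorm {k : ℕ} (F : Matrix (Fin k) (Fin k) ℂ) : ℝ :=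
  ‖Matrix.toEuclideanCLM (𝕜 := ℂ) F‖

/-- A unital separable C*-algebra is a Følner C*-algebra if it admits a sequence of u.c.p. maps
into matrix algebras which is asymptotically multiplicative in the normalized `2`-norms. -/
def IsFolnerAlgebra (A : Type*) [NormedRing A] [StarRing A] [NormedAlgebra ℂ A] : Prop :=
  ∃ (k : ℕ → ℕ) (φ : ∀ n, A →ₗ[ℂ] Matrix (Fin (k n)) (Fin (k n)) ℂ),
    (∀ n, IsUCP (φ n)) ∧
    ∀ a b : A, Tendsto (fun n => l2trNorm ((φ n) (a * b) - (φ n) a * (φ n) b)) atTop (𝓝 0)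

/-- A proper Følner C*-algebra: the u.c.p. maps can moreover be chosen
asymptotically isometric. -/
def IsProperFolnerAlgebra (A : Type*) [NormedRing A] [StarRing A] [NormedAlgebra ℂ A] : Prop :=
  ∃ (k : ℕ → ℕ) (φ : ∀ n, A →ₗ[ℂ] Matrix (Fin (k n)) (Fin (k n)) ℂ),
    (∀ n, IsUCP (φ n)) ∧
    (∀ a b : A, Tendsto (fun n => l2trNorm ((φ n) (a * b) - (φ n) a * (φ n) b)) atTop (𝓝 0)) ∧
    ∀ a : A, Tendsto (fun n => matOpNorm ((φ n) a)) atTop (𝓝 ‖a‖)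


/-! ### Auxiliary lemmas -/

private lemma contract_sq {n : ℕ} {R : Type*} [Ring R] [StarRing R]
    (z : Matrix (Fin n) (Fin n) R) (u : Fin n → R) :
    ∑ i, ∑ j, star (u i) * ((star z * z) i j) * u j
      = ∑ k, star (∑ j, z k j * u j) * (∑ j, z k j * u j) := by
  have h : ∀ k, star (∑ j, z k j * u j) * (∑ j, z k j * u j)
      = ∑ i, ∑ j, star (u i) * (star (z k i) * z k j) * u j := by
    intro k
    rw [star_sum, Finset.sum_mul]
    refine Finset.sum_congr rfl fun i _ => ?_
    rw [Finset.mul_sum]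
    refine Finset.sum_congr rfl fun j _ => ?_
    rw [star_mul]
    noncomm_ring
  simp only [h, Matrix.mul_apply, Matrix.star_apply, Finset.sum_mul, Finset.mul_sum]
  calc ∑ i : Fin n, ∑ j : Fin n, ∑ k : Fin n, star (u i) * (star (z k i) * z k j) * u j
      = ∑ i : Fin n, ∑ k : Fin n, ∑ j : Fin n,
          star (u i) * (star (z k i) * z k j) * u j :=
        Finset.sum_congr rfl fun i _ => Finset.sum_comm
    _ = ∑ k : Fin n, ∑ i : Fin n, ∑ j : Fin n,
          star (u i) * (star (z k i) * z k j) * u j := Finset.sum_comm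

private lemma isCP_star_comm {A B : Type*} [Ring A] [Algebra ℂ A] [StarRing A]
    [Ring B] [Algebra ℂ B] [StarRing B] (φ : A →ₗ[ℂ] B) (hφ : IsCP φ) (w : A) :
    φ (star w) = star (φ w) := by
  set y : Matrix (Fin 2) (Fin 2) A := !![1, w; 0, 0] with hy
  obtain ⟨z, hz⟩ := hφ 2 (star y * y) ⟨y, rfl⟩
  have e10 : (star y * y) 1 0 = star w := by
    simp [hy, Matrix.mul_apply, Matrix.star_apply, Fin.sum_univ_two]
  have e01 : (star y * y) 0 1 = w := by
    simp [hy, Matrix.mul_apply, Matrix.star_apply, Fin.sum_univ_two]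
  have h10 : φ (star w) = (star z * z) 1 0 := by
    rw [← hz, Matrix.map_apply, e10]
  have h01 : φ w = (star z * z) 0 1 := by
    rw [← hz, Matrix.map_apply, e01]
  rw [h10, h01, Matrix.mul_apply, Matrix.mul_apply, star_sum]
  refine Finset.sum_congr rfl fun k _ => ?_
  simp [Matrix.star_apply, star_mul]

private lemma key_expansion {B₀ B : Type*} [Ring B₀] [Algebra ℂ B₀] [StarRing B₀]
    [Ring B] [Algebra ℂ B] [StarRing B]
    (Φ : B₀ →ₗ[ℂ] B) (hΦ1 : Φ 1 = 1)
    (hstar : ∀ w, Φ (star w) = star (Φ w))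
    (x A : B₀) (h2 : Φ (star A * A) = star (Φ A) * Φ A) (c : B)
    (y : Matrix (Fin 4) (Fin 4) B₀)
    (hy : y = !![star x, A, 1, 0; 0,0,0,1; 0,0,0,0; 0,0,0,0])
    (u : Fin 4 → B) (hu : u = ![c, 1, -(Φ (star x) * c + Φ A), 0]) :
    ∑ i, ∑ j, star (u i) * Φ ((star y * y) i j) * u j
      = star c * (Φ (x * star x) - Φ x * star (Φ x)) * c
        + (star c * (Φ (x * A) - Φ x * Φ A) + star (Φ (x * A) - Φ x * Φ A) * c) := by
  subst hy hu
  simp only [Fin.sum_univ_four, Matrix.mul_apply, Matrix.star_apply]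
  simp only [Matrix.cons_val', Matrix.cons_val_zero, Matrix.cons_val_one, Matrix.head_cons,
    Matrix.empty_val', Matrix.cons_val_fin_one, Matrix.head_fin_const, Matrix.of_apply,
    Matrix.cons_val_two, Matrix.cons_val_three, Matrix.tail_cons, Matrix.head_val']
  simp only [star_zero, star_one, star_star, zero_mul, mul_zero, add_zero, zero_add,
    one_mul, mul_one, map_add, map_zero]
  rw [hΦ1, h2, show Φ (star A * star x) = star (Φ (x * A)) from by
    rw [← star_mul, hstar]]
  simp only [hstar, star_neg, star_add, star_sub, star_mul, star_star]
  noncomm_ring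

private lemma inner_star_mul_self {H : Type*} [NormedAddCommGroup H]
    [InnerProductSpace ℂ H] [CompleteSpace H] (T : H →L[ℂ] H) (ξ : H) :
    (inner ℂ ξ ((star T * T) ξ) : ℂ) = (‖T ξ‖ : ℂ) ^ 2 := by
  rw [ContinuousLinearMap.mul_apply, ContinuousLinearMap.star_eq_adjoint,
    ContinuousLinearMap.adjoint_inner_right, inner_self_eq_norm_sq_to_K]
  norm_cast

private lemma ucp_mult_right {H₀ : Type*} [NormedAddCommGroup H₀]
    [InnerProductSpace ℂ H₀] [CompleteSpace H₀]
    {H : Type*} [NormedAddCommGroup H] [InnerProductSpace ℂ H] [CompleteSpace H]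
    (Φ : (H₀ →L[ℂ] H₀) →ₗ[ℂ] (H →L[ℂ] H)) (hΦ1 : Φ 1 = 1) (hcp : IsCP Φ)
    (x A : H₀ →L[ℂ] H₀) (h2 : Φ (star A * A) = star (Φ A) * Φ A) :
    Φ (x * A) = Φ x * Φ A := by
  have hstar := isCP_star_comm Φ hcp
  set y : Matrix (Fin 4) (Fin 4) (H₀ →L[ℂ] H₀) :=
    !![star x, A, 1, 0; 0,0,0,1; 0,0,0,0; 0,0,0,0] with hy
  obtain ⟨z, hz⟩ := hcp 4 (star y * y) ⟨y, rfl⟩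
  set G := Φ (x * star x) - Φ x * star (Φ x) with hG
  set D := Φ (x * A) - Φ x * Φ A with hD
  have hbig : ∀ c : H →L[ℂ] H, ∃ s : Fin 4 → (H →L[ℂ] H),
      star c * G * c + (star c * D + star D * c) = ∑ k, star (s k) * s k := by
    intro c
    set u : Fin 4 → (H →L[ℂ] H) := ![c, 1, -(Φ (star x) * c + Φ A), 0] with hu
    refine ⟨fun k => ∑ j, z k j * u j, ?_⟩
    rw [← contract_sq z u]
    have hmem : ∀ i j, ((star z * z) i j) = Φ ((star y * y) i j) := fun i j => by
      rw [← hz, Matrix.map_apply]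
    simp only [hmem]
    exact (key_expansion Φ hΦ1 hstar x A h2 c y hy u hu).symm
  have hDξ : ∀ ξ : H, D ξ = 0 := by
    intro ξ
    set r : ℝ := ‖D ξ‖ ^ 2 with hr
    set C : ℝ := (inner ℂ ξ ((star D * G * D) ξ) : ℂ).re with hC
    have hineq : ∀ t : ℝ, 0 < t → 0 ≤ t ^ 2 * C - 2 * t * r := by
      intro t ht
      obtain ⟨s, hs⟩ := hbig (-((t : ℂ) • D))
      have hpos : 0 ≤ (inner ℂ ξ ((∑ k, star (s k) * s k) ξ) : ℂ).re := by
        rw [ContinuousLinearMap.sum_apply, inner_sum]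
        simp only [inner_star_mul_self]
        rw [Complex.re_sum]
        refine Finset.sum_nonneg fun k _ => ?_
        rw [← Complex.ofReal_pow, Complex.ofReal_re]
        positivity
      rw [← hs] at hpos
      have hstc : star (-((t : ℂ) • D)) = -((t : ℂ) • star D) := by
        simp [star_smul, Complex.conj_ofReal]
      have hop : star (-((t : ℂ) • D)) * G * (-((t : ℂ) • D))
            + (star (-((t : ℂ) • D)) * D + star D * (-((t : ℂ) • D)))
          = ((t : ℂ) ^ 2) • (star D * G * D) + (-((2 * t : ℝ) : ℂ)) • (star D * D) := by
        rw [hstc]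
        simp only [neg_mul, mul_neg, neg_neg, smul_mul_assoc, mul_smul_comm, smul_smul]
        push_cast
        rw [← add_assoc]
        module
      rw [hop] at hpos
      have hval : (inner ℂ ξ ((((t : ℂ) ^ 2) • (star D * G * D)
            + (-((2 * t : ℝ) : ℂ)) • (star D * D)) ξ) : ℂ).re
          = t ^ 2 * C - 2 * t * r := by
        rw [ContinuousLinearMap.add_apply, inner_add_right,
          ContinuousLinearMap.smul_apply, ContinuousLinearMap.smul_apply,
          inner_smul_right, inner_smul_right, inner_star_mul_self]
        rw [show ((t : ℂ) ^ 2) = ((t ^ 2 : ℝ) : ℂ) from by push_cast; ring,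
          show ((‖D ξ‖ : ℂ) ^ 2) = ((‖D ξ‖ ^ 2 : ℝ) : ℂ) from by push_cast; ring]
        simp only [Complex.add_re, neg_mul, Complex.neg_re, ← Complex.ofReal_mul,
          Complex.re_ofReal_mul, Complex.ofReal_re]
        rw [← hC, ← hr]
        ring
      rw [hval] at hpos
      exact hpos
    have hr0 : r = 0 := by
      by_contra hne
      have hrpos : 0 < r := lt_of_le_of_ne (by rw [hr]; positivity) (Ne.symm hne)
      have h1 := hineq 1 one_pos
      have hCpos : 0 < C := by nlinarith
      have h2' := hineq (r / C) (div_pos hrpos hCpos)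
      have e1 : (r / C) ^ 2 * C - 2 * (r / C) * r = -(r ^ 2 / C) := by
        field_simp
        ring
      rw [e1] at h2'
      have hq : 0 < r ^ 2 / C := div_pos (pow_pos hrpos 2) hCpos
      linarith
    have hn : ‖D ξ‖ ^ 2 = 0 := by rw [← hr]; exact hr0
    have : ‖D ξ‖ = 0 := by
      have := pow_eq_zero_iff (two_ne_zero) |>.mp hn
      exact this
    exact norm_eq_zero.mp this
  have hD0 : D = 0 := by
    ext ξ
    simp [hDξ ξ]
  rw [hD] at hD0
  exact sub_eq_zero.mp hD0

private lemma ucp_mult_left {H₀ : Type*} [NormedAddCommGroup H₀]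
    [InnerProductSpace ℂ H₀] [CompleteSpace H₀]
    {H : Type*} [NormedAddCommGroup H] [InnerProductSpace ℂ H] [CompleteSpace H]
    (Φ : (H₀ →L[ℂ] H₀) →ₗ[ℂ] (H →L[ℂ] H)) (hΦ1 : Φ 1 = 1) (hcp : IsCP Φ)
    (x A : H₀ →L[ℂ] H₀) (h2 : Φ (star (star A) * star A) = star (Φ (star A)) * Φ (star A)) :
    Φ (A * x) = Φ A * Φ x := by
  have hstar := isCP_star_comm Φ hcp
  have key := ucp_mult_right Φ hΦ1 hcp (star x) (star A) h2
  have : A * x = star (star x * star A) := by simp [star_mul]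
  rw [this, hstar, key, star_mul, hstar, hstar, star_star, star_star]

/-- transfer of amenable traces between representations. Let `π₀` be a
faithful unital representation and `π` a non-zero unital representation of the unital
separable C*-algebra `A` such that `π(A)` has an amenable trace, witnessed by a hypertrace
`ψ` on `L(H)`. If `Φ : L(H₀) → L(H)` is any u.c.p. map extending `π ∘ π₀⁻¹` (i.e.
`Φ(π₀ a) = π a`), then `ψ ∘ Φ` is a hypertrace on `L(H₀)` for `π₀(A)`; in particular
`π₀(A)` has an amenable trace. -/
theorem hypertrace_transfer_along_ucp
    {A : Type*} [NormedRing A] [StarRing A] [CStarRing A] [NormedAlgebra ℂ A]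
    [CompleteSpace A] [StarModule ℂ A] [TopologicalSpace.SeparableSpace A]
    {H₀ : Type*} [NormedAddCommGroup H₀] [InnerProductSpace ℂ H₀] [CompleteSpace H₀]
    {H : Type*} [NormedAddCommGroup H] [InnerProductSpace ℂ H] [CompleteSpace H]
    (π₀ : A →⋆ₐ[ℂ] (H₀ →L[ℂ] H₀)) (hπ₀ : Function.Injective π₀)
    (π : A →⋆ₐ[ℂ] (H →L[ℂ] H)) (hπnz : ∃ a : A, π a ≠ 0)
    (ψ : (H →L[ℂ] H) →ₗ[ℂ] ℂ) (hψ : IsHypertrace ψ (Set.range ⇑π))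
    (Φ : (H₀ →L[ℂ] H₀) →ₗ[ℂ] (H →L[ℂ] H)) (hΦ : IsUCP Φ)
    (hext : ∀ a : A, Φ (π₀ a) = π a) :
    IsHypertrace (ψ ∘ₗ Φ) (Set.range ⇑π₀) ∧
    ∃ ψ₀ : (H₀ →L[ℂ] H₀) →ₗ[ℂ] ℂ, IsHypertrace ψ₀ (Set.range ⇑π₀) := by
  have hΦ1 := hΦ.1
  have hcp := hΦ.2
  have hstar := isCP_star_comm Φ hcp
  have h2 : ∀ b : A, Φ (star (π₀ b) * π₀ b) = star (Φ (π₀ b)) * Φ (π₀ b) := by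
    intro b
    rw [← map_star, ← map_mul, hext, hext, map_mul, map_star]
  have hright : ∀ (X : H₀ →L[ℂ] H₀) (b : A), Φ (X * π₀ b) = Φ X * π b := by
    intro X b
    rw [ucp_mult_right Φ hΦ1 hcp X (π₀ b) (h2 b), hext]
  have hleft : ∀ (X : H₀ →L[ℂ] H₀) (b : A), Φ (π₀ b * X) = π b * Φ X := by
    intro X b
    have h2' : Φ (star (star (π₀ b)) * star (π₀ b))
        = star (Φ (star (π₀ b))) * Φ (star (π₀ b)) := by
      rw [← map_star π₀ b, h2 (star b)]
    rw [ucp_mult_left Φ hΦ1 hcp X (π₀ b) h2', hext]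
  have hmain : IsHypertrace (ψ ∘ₗ Φ) (Set.range ⇑π₀) := by
    refine ⟨⟨?_, ?_⟩, ?_⟩
    · show ψ (Φ 1) = 1
      rw [hΦ1]
      exact hψ.1.1
    · intro b
      show (0 : ℂ) ≤ ψ (Φ (star b * b))
      obtain ⟨z, hz⟩ := hcp 1 (star !![b] * !![b]) ⟨!![b], rfl⟩
      have e00 : (star !![b] * !![b] : Matrix (Fin 1) (Fin 1) _) 0 0 = star b * b := by
        simp [Matrix.mul_apply, Matrix.star_apply]
      have h00 : Φ (star b * b) = star (z 0 0) * z 0 0 := by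
        rw [← e00, ← Matrix.map_apply (f := ⇑Φ), hz, Matrix.mul_apply, Fin.sum_univ_one,
          Matrix.star_apply]
      rw [h00]
      exact hψ.1.2 (z 0 0)
    · rintro X A' ⟨b, rfl⟩
      show ψ (Φ (X * π₀ b)) = ψ (Φ (π₀ b * X))
      rw [hright X b, hleft X b]
      exact hψ.2 (Φ X) (π b) ⟨b, rfl⟩
  exact ⟨hmain, ψ ∘ₗ Φ, hmain⟩
end
end
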